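/- Let B_a ⊂ ℝ³ and E^{m,α}(B_a) = {f₁ + r f₂ : f₁, f₂ ∈ C^{m,α}(B̄_a)}. If f ∈ E^{m,α}(B_a) and f(x) ≠ 0 for all x ∈ B̄_a, then 1/f ∈ E^{m,α}(B_a). -/

import Mathlib

open Metric Real NNReal

noncomputable section

abbrev E3 := EuclideanSpace ℝ (Fin 3)

/-- The Hölder space C^{m,α}(s): m-times continuously differentiable on `s`
with α-Hölder continuous m-th derivatives. -/
def Holder (m : ℕ) (α : ℝ≥0) (s : Set E3) (f : E3 → ℝ) : Prop :=
  ContDiffOn ℝ m f s ∧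
    ∃ C : ℝ≥0, HolderOnWith C α (iteratedFDerivWithin ℝ m f s) s

/-- The space E^{m,α}(B_a): functions of the form f₁ + r f₂ with
f₁, f₂ ∈ C^{m,α}(B̄_a), where r(x) = |x|. -/
def Em (m : ℕ) (α : ℝ≥0) (a : ℝ) (f : E3 → ℝ) : Prop :=
  ∃ f₁ f₂ : E3 → ℝ, Holder m α (closedBall 0 a) f₁ ∧ Holder m α (closedBall 0 a) f₂ ∧
    ∀ x ∈ closedBall (0 : E3) a, f x = f₁ x + ‖x‖ * f₂ x

open ENNReal

set_option linter.unusedSectionVars false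
set_option linter.unusedVariables false
set_option maxHeartbeats 1000000
set_option synthInstance.maxHeartbeats 400000

section core
variable {F G H : Type} [NormedAddCommGroup F] [NormedSpace ℝ F]
  [NormedAddCommGroup G] [NormedSpace ℝ G] [NormedAddCommGroup H] [NormedSpace ℝ H]
variable (α : ℝ≥0) (a : ℝ)

/-- general-codomain Hölder class on the closed ball -/
def Hol (m : ℕ) (f : E3 → F) : Prop :=
  ContDiffOn ℝ m f (closedBall 0 a) ∧
    ∃ C : ℝ≥0, HolderOnWith C α (iteratedFDerivWithin ℝ m f (closedBall 0 a)) (closedBall 0 a)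

variable {α a}
variable (hα : 0 < α) (hα1 : (α:ℝ) ≤ 1) (ha : 0 < a)

theorem holder_iff_hol {m : ℕ} {f : E3 → ℝ} : Holder m α (closedBall 0 a) f ↔ Hol α a m f := Iff.rfl

theorem uds (ha : 0 < a) : UniqueDiffOn ℝ (closedBall (0:E3) a) := by
  apply uniqueDiffOn_convex (convex_closedBall _ _)
  rw [interior_closedBall _ ha.ne']
  exact ⟨0, mem_ball_self ha⟩

/-- Lipschitz on the ball implies Hölder on the ball. -/
theorem LipschitzOnWith.holder {f : E3 → F} {C : ℝ≥0}
    (hf : LipschitzOnWith C f (closedBall 0 a)) (hα : 0 < α) (hα1 : (α:ℝ) ≤ 1) (ha : 0 < a) :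
    HolderOnWith (C * (2*a).toNNReal ^ ((1:ℝ) - α)) α f (closedBall 0 a) := by
  intro x hx y hy
  rcases eq_or_ne (edist x y) 0 with h0 | h0
  · have := hf hx hy
    rw [h0] at this ⊢
    simp only [mul_zero] at this
    rw [ENNReal.zero_rpow_of_pos (by exact_mod_cast hα)]
    simpa using this
  · have hfin : edist x y ≠ ⊤ := edist_ne_top x y
    have hle : edist x y ≤ ((2*a).toNNReal : ℝ≥0∞) := by
      rw [edist_dist]
      have hco : ((2*a).toNNReal : ℝ≥0∞) = ENNReal.ofReal (2*a) := rfl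
      rw [hco]
      exact ENNReal.ofReal_le_ofReal (by
          have := dist_triangle x (0:E3) y
          have h1 : dist x (0:E3) ≤ a := mem_closedBall.1 hx
          have h2 : dist (0:E3) y ≤ a := by rw [dist_comm]; exact mem_closedBall.1 hy
          linarith)
    calc edist (f x) (f y) ≤ C * edist x y := hf hx hy
      _ = C * (edist x y ^ (α:ℝ) * edist x y ^ ((1:ℝ) - α)) := by
          rw [← ENNReal.rpow_add _ _ h0 hfin]
          norm_num
      _ ≤ C * (edist x y ^ (α:ℝ) * ((2*a).toNNReal : ℝ≥0∞) ^ ((1:ℝ) - α)) := by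
          exact mul_le_mul_right (mul_le_mul_right (ENNReal.rpow_le_rpow hle (by linarith)) _) _
      _ = ↑(C * (2*a).toNNReal ^ ((1:ℝ) - α)) * edist x y ^ (α:ℝ) := by
          rw [ENNReal.coe_mul, ← ENNReal.coe_rpow_of_nonneg _ (by linarith : (0:ℝ) ≤ 1 - α)]
          ring

end core

set_option linter.unusedSectionVars false
set_option linter.unusedVariables false
set_option maxHeartbeats 1000000
set_option synthInstance.maxHeartbeats 400000

section core2
variable {F G H : Type} [NormedAddCommGroup F] [NormedSpace ℝ F]
  [NormedAddCommGroup G] [NormedSpace ℝ G] [NormedAddCommGroup H] [NormedSpace ℝ H]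
variable {α : ℝ≥0} {a : ℝ}

theorem hol_of_contDiffOn_succ (hα : 0 < α) (hα1 : (α:ℝ) ≤ 1) (ha : 0 < a)
    {m : ℕ} {f : E3 → F} (h : ContDiffOn ℝ (m+1) f (closedBall 0 a)) :
    Hol α a m f := by
  have hu := uds ha
  refine ⟨h.of_le (by exact_mod_cast Nat.le_succ m), ?_⟩
  have hcont : ContinuousOn (iteratedFDerivWithin ℝ (m+1) f (closedBall 0 a)) (closedBall 0 a) :=
    h.continuousOn_iteratedFDerivWithin le_rfl hu
  obtain ⟨M, hM⟩ := (isCompact_closedBall (0:E3) a).exists_bound_of_continuousOn hcont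
  have hdiff : DifferentiableOn ℝ (iteratedFDerivWithin ℝ m f (closedBall 0 a)) (closedBall 0 a) :=
    h.differentiableOn_iteratedFDerivWithin (by exact_mod_cast Nat.lt_succ_self m) hu
  have hbd : ∀ x ∈ closedBall (0:E3) a,
      ‖fderivWithin ℝ (iteratedFDerivWithin ℝ m f (closedBall 0 a)) (closedBall 0 a) x‖₊
        ≤ M.toNNReal := by
    intro x hx
    have h1 : ‖fderivWithin ℝ (iteratedFDerivWithin ℝ m f (closedBall 0 a)) (closedBall 0 a) x‖
        = ‖iteratedFDerivWithin ℝ (m+1) f (closedBall 0 a) x‖ :=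
      norm_fderivWithin_iteratedFDerivWithin
    have h2 := hM x hx
    rw [← norm_toNNReal]
    exact Real.toNNReal_mono (h1.le.trans h2)
  have hlip : LipschitzOnWith M.toNNReal (iteratedFDerivWithin ℝ m f (closedBall 0 a))
      (closedBall 0 a) :=
    Convex.lipschitzOnWith_of_nnnorm_fderivWithin_le hdiff hbd (convex_closedBall _ _)
  exact ⟨_, hlip.holder hα hα1 ha⟩

theorem hol_smooth (hα : 0 < α) (hα1 : (α:ℝ) ≤ 1) (ha : 0 < a)
    {m : ℕ} {f : E3 → F} (h : ContDiff ℝ (⊤:ℕ∞) f) : Hol α a m f :=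
  hol_of_contDiffOn_succ hα hα1 ha ((h.of_le (by exact_mod_cast le_top)).contDiffOn)

theorem Hol.descend (hα : 0 < α) (hα1 : (α:ℝ) ≤ 1) (ha : 0 < a)
    {m : ℕ} {f : E3 → F} (h : Hol α a (m+1) f) : Hol α a m f :=
  hol_of_contDiffOn_succ hα hα1 ha h.1

theorem Hol.bound (ha : 0 < a) {m : ℕ} {f : E3 → F} (h : Hol α a m f) :
    ∃ M : ℝ≥0, ∀ x ∈ closedBall (0:E3) a, ‖iteratedFDerivWithin ℝ m f (closedBall 0 a) x‖₊ ≤ M := by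
  obtain ⟨M, hM⟩ := (isCompact_closedBall (0:E3) a).exists_bound_of_continuousOn
    (h.1.continuousOn_iteratedFDerivWithin le_rfl (uds ha))
  exact ⟨M.toNNReal, fun x hx => by rw [← norm_toNNReal]; exact Real.toNNReal_mono (hM x hx)⟩

/-- value-level Hölder bound from `Hol 0` -/
theorem Hol.holder0 {f : E3 → F} {C : ℝ≥0}
    (h : HolderOnWith C α (iteratedFDerivWithin ℝ 0 f (closedBall 0 a)) (closedBall 0 a)) :
    HolderOnWith C α f (closedBall 0 a) := by
  intro x hx y hy
  have hiso := (continuousMultilinearCurryFin0 ℝ E3 F).symm.isometry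
  have e1 : edist (f x) (f y)
      = edist (iteratedFDerivWithin ℝ 0 f (closedBall 0 a) x)
          (iteratedFDerivWithin ℝ 0 f (closedBall 0 a) y) := by
    rw [iteratedFDerivWithin_zero_eq_comp]
    exact (hiso.edist_eq _ _).symm
  rw [e1]; exact h x hx y hy

theorem Hol.holder0' {f : E3 → F} {C : ℝ≥0} (hC : HolderOnWith C α f (closedBall 0 a)) :
    HolderOnWith C α (iteratedFDerivWithin ℝ 0 f (closedBall 0 a)) (closedBall 0 a) := by
  intro x hx y hy
  have hiso := (continuousMultilinearCurryFin0 ℝ E3 F).symm.isometry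
  rw [iteratedFDerivWithin_zero_eq_comp]
  show edist ((continuousMultilinearCurryFin0 ℝ E3 F).symm (f x))
      ((continuousMultilinearCurryFin0 ℝ E3 F).symm (f y)) ≤ _
  rw [hiso.edist_eq]
  exact hC x hx y hy

theorem Hol.add (ha : 0 < a) {m : ℕ} {f g : E3 → F} (hf : Hol α a m f) (hg : Hol α a m g) :
    Hol α a m (fun x => f x + g x) := by
  have hu := uds ha
  refine ⟨(hf.1.add hg.1 : ), ?_⟩
  obtain ⟨Cf, hCf⟩ := hf.2
  obtain ⟨Cg, hCg⟩ := hg.2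
  refine ⟨Cf + Cg, fun x hx y hy => ?_⟩
  have e1 : iteratedFDerivWithin ℝ m (fun x => f x + g x) (closedBall 0 a) x
      = iteratedFDerivWithin ℝ m f (closedBall 0 a) x
        + iteratedFDerivWithin ℝ m g (closedBall 0 a) x :=
    iteratedFDerivWithin_add_apply' (hf.1 x hx) (hg.1 x hx) hu hx
  have e2 : iteratedFDerivWithin ℝ m (fun x => f x + g x) (closedBall 0 a) y
      = iteratedFDerivWithin ℝ m f (closedBall 0 a) y
        + iteratedFDerivWithin ℝ m g (closedBall 0 a) y :=
    iteratedFDerivWithin_add_apply' (hf.1 y hy) (hg.1 y hy) hu hy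
  rw [e1, e2]
  calc edist _ _ ≤ _ + _ := edist_add_add_le _ _ _ _
    _ ≤ Cf * edist x y ^ (α:ℝ) + Cg * edist x y ^ (α:ℝ) := add_le_add (hCf x hx y hy) (hCg x hx y hy)
    _ = ↑(Cf + Cg) * edist x y ^ (α:ℝ) := by rw [ENNReal.coe_add, add_mul]

end core2

section core3
variable {F G H : Type} [NormedAddCommGroup F] [NormedSpace ℝ F]
  [NormedAddCommGroup G] [NormedSpace ℝ G] [NormedAddCommGroup H] [NormedSpace ℝ H]
variable {α : ℝ≥0} {a : ℝ}

theorem Hol.clm_comp (ha : 0 < a) {m : ℕ} {f : E3 → F} (L : F →L[ℝ] G)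
    (hf : Hol α a m f) : Hol α a m (fun x => L (f x)) := by
  have hu := uds ha
  refine ⟨hf.1.continuousLinearMap_comp L, ?_⟩
  obtain ⟨C, hC⟩ := hf.2
  refine ⟨‖L‖₊ * C, fun x hx y hy => ?_⟩
  have ex : iteratedFDerivWithin ℝ m (fun x => L (f x)) (closedBall 0 a) x
      = L.compContinuousMultilinearMap (iteratedFDerivWithin ℝ m f (closedBall 0 a) x) :=
    L.iteratedFDerivWithin_comp_left (hf.1 x hx) hu hx le_rfl
  have ey : iteratedFDerivWithin ℝ m (fun x => L (f x)) (closedBall 0 a) y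
      = L.compContinuousMultilinearMap (iteratedFDerivWithin ℝ m f (closedBall 0 a) y) :=
    L.iteratedFDerivWithin_comp_left (hf.1 y hy) hu hy le_rfl
  rw [ex, ey]
  set A := iteratedFDerivWithin ℝ m f (closedBall 0 a) x
  set B := iteratedFDerivWithin ℝ m f (closedBall 0 a) y
  have hsub : L.compContinuousMultilinearMap A - L.compContinuousMultilinearMap B
      = L.compContinuousMultilinearMap (A - B) := by
    ext v
    simp [ContinuousLinearMap.compContinuousMultilinearMap_coe]
  have hnn : ‖L.compContinuousMultilinearMap (A - B)‖₊ ≤ ‖L‖₊ * ‖A - B‖₊ := by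
    rw [← NNReal.coe_le_coe]
    push_cast
    exact L.norm_compContinuousMultilinearMap_le (A - B)
  calc edist (L.compContinuousMultilinearMap A) (L.compContinuousMultilinearMap B)
      = (‖L.compContinuousMultilinearMap (A - B)‖₊ : ℝ≥0∞) := by
        rw [edist_eq_enorm_sub, hsub, enorm_eq_nnnorm]
    _ ≤ (‖L‖₊ : ℝ≥0∞) * ‖A - B‖₊ := by exact_mod_cast hnn
    _ = (‖L‖₊ : ℝ≥0∞) * edist A B := by rw [edist_eq_enorm_sub, enorm_eq_nnnorm]
    _ ≤ (‖L‖₊ : ℝ≥0∞) * (C * edist x y ^ (α:ℝ)) := by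
        exact mul_le_mul_right (hC x hx y hy) _
    _ = ↑(‖L‖₊ * C) * edist x y ^ (α:ℝ) := by rw [ENNReal.coe_mul, mul_assoc]

theorem Hol.neg (ha : 0 < a) {m : ℕ} {f : E3 → F} (hf : Hol α a m f) :
    Hol α a m (fun x => -(f x)) := by
  have := hf.clm_comp ha (-(ContinuousLinearMap.id ℝ F))
  simpa using this

theorem Hol.deriv (ha : 0 < a) {m : ℕ} {f : E3 → F} (hf : Hol α a (m+1) f) :
    Hol α a m (fderivWithin ℝ f (closedBall 0 a)) := by
  have hu := uds ha
  refine ⟨hf.1.fderivWithin hu (by exact_mod_cast le_rfl), ?_⟩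
  obtain ⟨C, hC⟩ := hf.2
  refine ⟨C, fun x hx y hy => ?_⟩
  have hiso := (continuousMultilinearCurryRightEquiv' ℝ m E3 F).symm.isometry
  have ex := iteratedFDerivWithin_succ_eq_comp_right (n := m) (f := f) hu hx
  have ey := iteratedFDerivWithin_succ_eq_comp_right (n := m) (f := f) hu hy
  have key : edist (iteratedFDerivWithin ℝ (m+1) f (closedBall 0 a) x)
      (iteratedFDerivWithin ℝ (m+1) f (closedBall 0 a) y)
      = edist (iteratedFDerivWithin ℝ m (fderivWithin ℝ f (closedBall 0 a)) (closedBall 0 a) x)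
          (iteratedFDerivWithin ℝ m (fderivWithin ℝ f (closedBall 0 a)) (closedBall 0 a) y) := by
    rw [ex, ey]
    exact hiso.edist_eq _ _
  rw [← key]
  exact hC x hx y hy

end core3

section core4
variable {α : ℝ≥0} {a : ℝ}

theorem hol_bilin (hα : 0 < α) (hα1 : (α:ℝ) ≤ 1) (ha : 0 < a) : ∀ (m : ℕ)
    {F G H : Type} [NormedAddCommGroup F] [NormedSpace ℝ F]
    [NormedAddCommGroup G] [NormedSpace ℝ G] [NormedAddCommGroup H] [NormedSpace ℝ H]
    (B : F →L[ℝ] G →L[ℝ] H) (f : E3 → F) (g : E3 → G),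
    Hol α a m f → Hol α a m g → Hol α a m (fun x => B (f x) (g x)) := by
  intro m
  induction m with
  | zero =>
    intro F G H _ _ _ _ _ _ B f g hf hg
    obtain ⟨Cf, hCf⟩ := hf.2
    obtain ⟨Cg, hCg⟩ := hg.2
    have hCf' : HolderOnWith Cf α f (closedBall 0 a) := Hol.holder0 hCf
    have hCg' : HolderOnWith Cg α g (closedBall 0 a) := Hol.holder0 hCg
    obtain ⟨Mf, hMf⟩ := hf.bound ha
    obtain ⟨Mg, hMg⟩ := hg.bound ha
    have hMf' : ∀ x ∈ closedBall (0:E3) a, ‖f x‖₊ ≤ Mf := by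
      intro x hx
      have h1 : ‖f x‖ = ‖iteratedFDerivWithin ℝ 0 f (closedBall 0 a) x‖ :=
        (norm_iteratedFDerivWithin_zero).symm
      have : ‖f x‖₊ = ‖iteratedFDerivWithin ℝ 0 f (closedBall 0 a) x‖₊ :=
        NNReal.coe_injective h1
      rw [this]; exact hMf x hx
    have hMg' : ∀ x ∈ closedBall (0:E3) a, ‖g x‖₊ ≤ Mg := by
      intro x hx
      have h1 : ‖g x‖ = ‖iteratedFDerivWithin ℝ 0 g (closedBall 0 a) x‖ :=
        (norm_iteratedFDerivWithin_zero).symm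
      have : ‖g x‖₊ = ‖iteratedFDerivWithin ℝ 0 g (closedBall 0 a) x‖₊ :=
        NNReal.coe_injective h1
      rw [this]; exact hMg x hx
    have hcd : ContDiffOn ℝ (0:ℕ) (fun x => B (f x) (g x)) (closedBall 0 a) :=
      (B.isBoundedBilinearMap.contDiff.comp_contDiffOn (hf.1.prodMk hg.1))
    refine ⟨hcd, ‖B‖₊ * (Mg * Cf + Mf * Cg), Hol.holder0' ?_⟩
    intro x hx y hy
    have key1 : (edist (B (f x) (g x)) (B (f y) (g x)) : ℝ≥0∞)
        ≤ (‖B‖₊ * Mg : ℝ≥0∞) * edist (f x) (f y) := by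
      rw [edist_eq_enorm_sub, edist_eq_enorm_sub, enorm_eq_nnnorm, enorm_eq_nnnorm]
      have e1 : B (f x) (g x) - B (f y) (g x) = B (f x - f y) (g x) := by
        simp [map_sub, ContinuousLinearMap.sub_apply]
      rw [e1]
      have h2 : ‖B (f x - f y) (g x)‖₊ ≤ ‖B‖₊ * ‖f x - f y‖₊ * ‖g x‖₊ := by
        rw [← NNReal.coe_le_coe]; push_cast; exact B.le_opNorm₂ _ _
      calc (‖B (f x - f y) (g x)‖₊ : ℝ≥0∞) ≤ ↑(‖B‖₊ * ‖f x - f y‖₊ * ‖g x‖₊) := by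
            exact_mod_cast h2
        _ ≤ ↑(‖B‖₊ * ‖f x - f y‖₊ * Mg) := by
            exact_mod_cast mul_le_mul_right (hMg' x hx) _
        _ = (‖B‖₊ * Mg : ℝ≥0∞) * ↑‖f x - f y‖₊ := by push_cast; ring
    have key2 : (edist (B (f y) (g x)) (B (f y) (g y)) : ℝ≥0∞)
        ≤ (‖B‖₊ * Mf : ℝ≥0∞) * edist (g x) (g y) := by
      rw [edist_eq_enorm_sub, edist_eq_enorm_sub, enorm_eq_nnnorm, enorm_eq_nnnorm]
      have e1 : B (f y) (g x) - B (f y) (g y) = B (f y) (g x - g y) := by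
        simp [map_sub]
      rw [e1]
      have h2 : ‖B (f y) (g x - g y)‖₊ ≤ ‖B‖₊ * ‖f y‖₊ * ‖g x - g y‖₊ := by
        rw [← NNReal.coe_le_coe]; push_cast; exact B.le_opNorm₂ _ _
      calc (‖B (f y) (g x - g y)‖₊ : ℝ≥0∞) ≤ ↑(‖B‖₊ * ‖f y‖₊ * ‖g x - g y‖₊) := by
            exact_mod_cast h2
        _ ≤ ↑(‖B‖₊ * Mf * ‖g x - g y‖₊) := by
            exact_mod_cast mul_le_mul_left (mul_le_mul_right (hMf' y hy) _) _
        _ = (‖B‖₊ * Mf : ℝ≥0∞) * ↑‖g x - g y‖₊ := by push_cast; ring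
    calc edist (B (f x) (g x)) (B (f y) (g y))
        ≤ edist (B (f x) (g x)) (B (f y) (g x)) + edist (B (f y) (g x)) (B (f y) (g y)) :=
          edist_triangle _ _ _
      _ ≤ (‖B‖₊ * Mg : ℝ≥0∞) * edist (f x) (f y) + (‖B‖₊ * Mf : ℝ≥0∞) * edist (g x) (g y) :=
          add_le_add key1 key2
      _ ≤ (‖B‖₊ * Mg : ℝ≥0∞) * (Cf * edist x y ^ (α:ℝ))
            + (‖B‖₊ * Mf : ℝ≥0∞) * (Cg * edist x y ^ (α:ℝ)) :=
          add_le_add (mul_le_mul_right (hCf' x hx y hy) _)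
            (mul_le_mul_right (hCg' x hx y hy) _)
      _ = ↑(‖B‖₊ * (Mg * Cf + Mf * Cg)) * edist x y ^ (α:ℝ) := by push_cast; ring
  | succ m ih =>
    intro F G H _ _ _ _ _ _ B f g hf hg
    have hu := uds ha
    have hcd : ContDiffOn ℝ ((m:ℕ∞)+1) (fun x => B (f x) (g x)) (closedBall 0 a) := by
      have := (B.isBoundedBilinearMap.contDiff.comp_contDiffOn (hf.1.prodMk hg.1))
      exact_mod_cast this
    -- the derivative as a nice expression
    have hfd : DifferentiableOn ℝ f (closedBall 0 a) :=
      hf.1.differentiableOn (by simp)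
    have hgd : DifferentiableOn ℝ g (closedBall 0 a) :=
      hg.1.differentiableOn (by simp)
    set Φ : E3 → (E3 →L[ℝ] H) := fun x =>
      ContinuousLinearMap.compL ℝ E3 G H (B (f x)) (fderivWithin ℝ g (closedBall 0 a) x)
      + ContinuousLinearMap.compL ℝ E3 F H (B.flip (g x)) (fderivWithin ℝ f (closedBall 0 a) x)
      with hΦ
    have hderiv : ∀ x ∈ closedBall (0:E3) a,
        fderivWithin ℝ (fun y => B (f y) (g y)) (closedBall 0 a) x = Φ x := by
      intro x hx
      have hfx : HasFDerivWithinAt f (fderivWithin ℝ f (closedBall 0 a) x) (closedBall 0 a) x :=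
        (hfd x hx).hasFDerivWithinAt
      have hgx : HasFDerivWithinAt g (fderivWithin ℝ g (closedBall 0 a) x) (closedBall 0 a) x :=
        (hgd x hx).hasFDerivWithinAt
      have hc : HasFDerivWithinAt (fun y => B (f y))
          (B.comp (fderivWithin ℝ f (closedBall 0 a) x)) (closedBall 0 a) x :=
        (B.hasFDerivAt).comp_hasFDerivWithinAt x hfx
      have happ := hc.clm_apply hgx
      have := happ.fderivWithin (hu x hx)
      rw [this, hΦ]
      ext v
      simp [ContinuousLinearMap.compL_apply]
    -- Hol m Φ
    have hBf : Hol α a m (fun x => B (f x)) :=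
      (hf.descend hα hα1 ha).clm_comp ha B
    have hBg : Hol α a m (fun x => B.flip (g x)) :=
      (hg.descend hα hα1 ha).clm_comp ha B.flip
    have hf' : Hol α a m (fderivWithin ℝ f (closedBall 0 a)) := hf.deriv ha
    have hg' : Hol α a m (fderivWithin ℝ g (closedBall 0 a)) := hg.deriv ha
    have hΦ1 : Hol α a m (fun x =>
        ContinuousLinearMap.compL ℝ E3 G H (B (f x)) (fderivWithin ℝ g (closedBall 0 a) x)) :=
      ih (ContinuousLinearMap.compL ℝ E3 G H) _ _ hBf hg'
    have hΦ2 : Hol α a m (fun x =>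
        ContinuousLinearMap.compL ℝ E3 F H (B.flip (g x)) (fderivWithin ℝ f (closedBall 0 a) x)) :=
      ih (ContinuousLinearMap.compL ℝ E3 F H) _ _ hBg hf'
    have hΦhol : Hol α a m Φ := hΦ1.add ha hΦ2
    obtain ⟨C, hC⟩ := hΦhol.2
    refine ⟨hcd, C, fun x hx y hy => ?_⟩
    have hiso := (continuousMultilinearCurryRightEquiv' ℝ m E3 H).symm.isometry
    have ex := iteratedFDerivWithin_succ_eq_comp_right (n := m)
      (f := fun y => B (f y) (g y)) hu hx
    have ey := iteratedFDerivWithin_succ_eq_comp_right (n := m)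
      (f := fun y => B (f y) (g y)) hu hy
    rw [ex, ey, Function.comp_apply, Function.comp_apply, hiso.edist_eq]
    have ecx : iteratedFDerivWithin ℝ m
        (fderivWithin ℝ (fun y => B (f y) (g y)) (closedBall 0 a)) (closedBall 0 a) x
        = iteratedFDerivWithin ℝ m Φ (closedBall 0 a) x :=
      iteratedFDerivWithin_congr (fun z hz => hderiv z hz) hx m
    have ecy : iteratedFDerivWithin ℝ m
        (fderivWithin ℝ (fun y => B (f y) (g y)) (closedBall 0 a)) (closedBall 0 a) y
        = iteratedFDerivWithin ℝ m Φ (closedBall 0 a) y :=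
      iteratedFDerivWithin_congr (fun z hz => hderiv z hz) hy m
    rw [ecx, ecy]
    exact hC x hx y hy

end core4

section core5
variable {α : ℝ≥0} {a : ℝ}

theorem Hol.mul (hα : 0 < α) (hα1 : (α:ℝ) ≤ 1) (ha : 0 < a) {m : ℕ} {f g : E3 → ℝ}
    (hf : Hol α a m f) (hg : Hol α a m g) : Hol α a m (fun x => f x * g x) := by
  have := hol_bilin hα hα1 ha m (ContinuousLinearMap.mul ℝ ℝ) f g hf hg
  simpa using this

theorem Hol.inv (hα : 0 < α) (hα1 : (α:ℝ) ≤ 1) (ha : 0 < a) : ∀ (m : ℕ) (f : E3 → ℝ),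
    Hol α a m f → (∀ x ∈ closedBall (0:E3) a, f x ≠ 0) →
    Hol α a m (fun x => (f x)⁻¹) := by
  intro m
  induction m with
  | zero =>
    intro f hf hne
    have h0s : (0:E3) ∈ closedBall (0:E3) a := mem_closedBall_self ha.le
    obtain ⟨z, hz, hminz⟩ := (isCompact_closedBall (0:E3) a).exists_isMinOn ⟨0, h0s⟩
      (hf.1.continuousOn.abs)
    have hεpos : 0 < |f z| := abs_pos.mpr (hne z hz)
    obtain ⟨C, hC⟩ := hf.2
    have hC' : HolderOnWith C α f (closedBall 0 a) := Hol.holder0 hC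
    refine ⟨hf.1.inv hne, ((|f z|⁻¹ * |f z|⁻¹).toNNReal * C), Hol.holder0' ?_⟩
    intro x hx y hy
    have hfx : |f z| ≤ |f x| := hminz hx
    have hfy : |f z| ≤ |f y| := hminz hy
    have hxne := hne x hx
    have hyne := hne y hy
    have hreal : |(f x)⁻¹ - (f y)⁻¹| ≤ (|f z|⁻¹ * |f z|⁻¹) * |f x - f y| := by
      have e1 : (f x)⁻¹ - (f y)⁻¹ = (f y - f x) / (f x * f y) := by
        field_simp
      rw [e1, abs_div, abs_mul, abs_sub_comm (f y) (f x)]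
      have hden : |f z| * |f z| ≤ |f x| * |f y| :=
        mul_le_mul hfx hfy hεpos.le (abs_nonneg _)
      calc |f x - f y| / (|f x| * |f y|)
          ≤ |f x - f y| / (|f z| * |f z|) :=
            div_le_div_of_nonneg_left (abs_nonneg _) (by positivity) hden
        _ = (|f z|⁻¹ * |f z|⁻¹) * |f x - f y| := by
            rw [div_eq_mul_inv, mul_inv]; ring
    calc edist ((f x)⁻¹) ((f y)⁻¹) = ENNReal.ofReal |(f x)⁻¹ - (f y)⁻¹| := by
          rw [edist_dist, Real.dist_eq]
      _ ≤ ENNReal.ofReal ((|f z|⁻¹ * |f z|⁻¹) * |f x - f y|) := ENNReal.ofReal_le_ofReal hreal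
      _ = ENNReal.ofReal (|f z|⁻¹ * |f z|⁻¹) * ENNReal.ofReal |f x - f y| :=
          ENNReal.ofReal_mul (by positivity)
      _ = ((|f z|⁻¹ * |f z|⁻¹).toNNReal : ℝ≥0∞) * edist (f x) (f y) := by
          rw [edist_dist, Real.dist_eq]; rfl
      _ ≤ ((|f z|⁻¹ * |f z|⁻¹).toNNReal : ℝ≥0∞) * (C * edist x y ^ (α:ℝ)) :=
          mul_le_mul_right (hC' x hx y hy) _
      _ = ↑((|f z|⁻¹ * |f z|⁻¹).toNNReal * C) * edist x y ^ (α:ℝ) := by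
          rw [ENNReal.coe_mul, mul_assoc]
  | succ m ih =>
    intro f hf hne
    have hu := uds ha
    have hfm := hf.descend hα hα1 ha
    have hinvm := ih f hfm hne
    have hsc : Hol α a m (fun x => -((f x)⁻¹ * (f x)⁻¹)) :=
      (hinvm.mul hα hα1 ha hinvm).neg ha
    set Φ : E3 → (E3 →L[ℝ] ℝ) := fun x =>
      ContinuousLinearMap.lsmul ℝ ℝ (-((f x)⁻¹ * (f x)⁻¹))
        (fderivWithin ℝ f (closedBall 0 a) x) with hΦdef
    have hΦhol : Hol α a m Φ :=
      hol_bilin hα hα1 ha m (ContinuousLinearMap.lsmul ℝ ℝ) _ _ hsc (hf.deriv ha)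
    have hcd : ContDiffOn ℝ ((m:ℕ∞)+1) (fun x => (f x)⁻¹) (closedBall 0 a) := by
      have := hf.1.inv hne
      exact_mod_cast this
    have hfd : DifferentiableOn ℝ f (closedBall 0 a) :=
      hf.1.differentiableOn (by simp)
    have hderiv : ∀ x ∈ closedBall (0:E3) a,
        fderivWithin ℝ (fun y => (f y)⁻¹) (closedBall 0 a) x = Φ x := by
      intro x hx
      have hfx := (hfd x hx).hasFDerivWithinAt
      have hinv := (hasFDerivAt_inv' (𝕜 := ℝ) (hne x hx)).comp_hasFDerivWithinAt x hfx
      have heq := hinv.fderivWithin (hu x hx)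
      have hfun : (Inv.inv ∘ f) = fun y => (f y)⁻¹ := rfl
      rw [hfun] at heq
      rw [heq, hΦdef]
      ext v
      simp only [ContinuousLinearMap.coe_comp', Function.comp_apply,
        ContinuousLinearMap.neg_apply, ContinuousLinearMap.mulLeftRight_apply,
        ContinuousLinearMap.lsmul_apply, smul_eq_mul, ContinuousLinearMap.smul_apply]
      ring
    refine ⟨hcd, ?_⟩
    obtain ⟨C, hC⟩ := hΦhol.2
    refine ⟨C, fun x hx y hy => ?_⟩
    have hiso := (continuousMultilinearCurryRightEquiv' ℝ m E3 ℝ).symm.isometry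
    have ex := iteratedFDerivWithin_succ_eq_comp_right (n := m)
      (f := fun y => (f y)⁻¹) hu hx
    have ey := iteratedFDerivWithin_succ_eq_comp_right (n := m)
      (f := fun y => (f y)⁻¹) hu hy
    rw [ex, ey, Function.comp_apply, Function.comp_apply, hiso.edist_eq]
    have ecx : iteratedFDerivWithin ℝ m
        (fderivWithin ℝ (fun y => (f y)⁻¹) (closedBall 0 a)) (closedBall 0 a) x
        = iteratedFDerivWithin ℝ m Φ (closedBall 0 a) x :=
      iteratedFDerivWithin_congr (fun z hz => hderiv z hz) hx m
    have ecy : iteratedFDerivWithin ℝ m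
        (fderivWithin ℝ (fun y => (f y)⁻¹) (closedBall 0 a)) (closedBall 0 a) y
        = iteratedFDerivWithin ℝ m Φ (closedBall 0 a) y :=
      iteratedFDerivWithin_congr (fun z hz => hderiv z hz) hy m
    rw [ecx, ecy]
    exact hC x hx y hy

end core5

/-- If f ∈ E^{m,α}(B_a) and f(x) ≠ 0 for all x ∈ B̄_a, then 1/f ∈ E^{m,α}(B_a). -/
theorem stmt3 (m : ℕ) (α : ℝ≥0) (hα : 0 < α) (hα1 : (α : ℝ) < 1)
    (a : ℝ) (ha : 0 < a) (f : E3 → ℝ)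
    (hf : Em m α a f) (hne : ∀ x ∈ closedBall (0 : E3) a, f x ≠ 0) :
    Em m α a (fun x => (f x)⁻¹) := by
  obtain ⟨f₁, f₂, h1', h2', hrep⟩ := hf
  have h1 : Hol α a m f₁ := h1'
  have h2 : Hol α a m f₂ := h2'
  have hα1' : (α:ℝ) ≤ 1 := hα1.le
  have hu := uds ha
  have h0s : (0:E3) ∈ closedBall (0:E3) a := mem_closedBall_self ha.le
  have hc1 : ContinuousOn f₁ (closedBall 0 a) := h1.1.continuousOn
  have hc2 : ContinuousOn f₂ (closedBall 0 a) := h2.1.continuousOn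
  have hcf : ContinuousOn f (closedBall 0 a) :=
    ContinuousOn.congr (hc1.add ((continuous_norm.continuousOn).mul hc2)) hrep
  -- minimum of |f|
  obtain ⟨z, hz, hminz⟩ := (isCompact_closedBall (0:E3) a).exists_isMinOn ⟨0, h0s⟩ hcf.abs
  have hεfpos : 0 < |f z| := abs_pos.mpr (hne z hz)
  set εf := |f z| with hεfdef
  -- bound for f₂
  obtain ⟨M₂, hM₂⟩ := (isCompact_closedBall (0:E3) a).exists_bound_of_continuousOn hc2
  have hM₂0 : 0 ≤ M₂ := le_trans (norm_nonneg _) (hM₂ 0 h0s)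
  set η := εf / (2 * (M₂ + 1)) with hηdef
  have hηpos : 0 < η := by positivity
  have hηM₂ : η * M₂ < εf := by
    have h2p : (0:ℝ) < 2*(M₂+1) := by positivity
    rw [hηdef, div_mul_eq_mul_div]
    rw [div_lt_iff₀ h2p]
    nlinarith
  -- the function D
  set D := fun x : E3 => f₁ x ^ 2 - ‖x‖^2 * f₂ x ^ 2 with hDdef
  have hcD : ContinuousOn D (closedBall 0 a) :=
    (hc1.pow 2).sub (((continuous_norm.pow 2).continuousOn).mul (hc2.pow 2))
  have hf0 : f 0 = f₁ 0 := by
    have := hrep 0 h0s; simpa using this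
  have hD0 : D 0 = f 0 ^ 2 := by simp [hDdef, hf0]
  have hD0pos : 0 < D 0 := by
    rw [hD0]
    have := hne 0 h0s
    positivity
  set ε₀ := D 0 / 2 with hε₀def
  have hε₀pos : 0 < ε₀ := half_pos hD0pos
  -- δ
  have hcw : ContinuousWithinAt D (closedBall 0 a) 0 := hcD 0 h0s
  rw [Metric.continuousWithinAt_iff] at hcw
  obtain ⟨δ', hδ'pos, hδ'⟩ := hcw ε₀ hε₀pos
  set δ := δ'/2 with hδdef
  have hδpos : 0 < δ := half_pos hδ'pos
  have hDlow : ∀ x ∈ closedBall (0:E3) a, ‖x‖ ≤ δ → ε₀ ≤ D x := by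
    intro x hx hxd
    have hdist : dist x 0 < δ' := by rw [dist_zero_right]; rw [hδdef] at hxd; linarith
    have h3 := hδ' hx hdist
    rw [Real.dist_eq] at h3
    have h4 := abs_lt.mp h3
    rw [hε₀def] at h4 ⊢
    linarith [h4.1]
  -- bumps
  set χ₀ : ContDiffBump (0:E3) := ⟨δ/8, δ/4, by positivity, by linarith⟩ with hχ₀def
  set χ : ContDiffBump (0:E3) := ⟨δ/4, δ/2, by positivity, by linarith⟩ with hχdef
  set χ₁ : ContDiffBump (0:E3) := ⟨δ/2, δ, by positivity, by linarith⟩ with hχ₁def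
  -- the smoothed radius ρ
  set w := fun x : E3 => ‖x‖^2 + (η * χ₀ x)^2 with hwdef
  have hwsmooth : ContDiff ℝ (⊤:ℕ∞) w :=
    (contDiff_norm_sq ℝ).add ((contDiff_const.mul χ₀.contDiff).pow 2)
  have hwpos : ∀ x, 0 < w x := by
    intro x
    rcases eq_or_ne x 0 with rfl | hx
    · have hone : χ₀ 0 = 1 := χ₀.one_of_mem_closedBall (mem_closedBall_self (by positivity))
      simp only [hwdef, hone, norm_zero]
      positivity
    · have h1' : 0 < ‖x‖ := norm_pos_iff.mpr hx
      have : (0:ℝ) ≤ (η * χ₀ x)^2 := sq_nonneg _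
      simp only [hwdef]
      positivity
  set ρ := fun x : E3 => Real.sqrt (w x) with hρdef
  have hρsmooth : ContDiff ℝ (⊤:ℕ∞) ρ := by
    rw [contDiff_iff_contDiffAt]
    intro x
    exact (contDiffAt_sqrt (hwpos x).ne').comp x hwsmooth.contDiffAt
  have hρeq : ∀ x : E3, χ₀ x = 0 → ρ x = ‖x‖ := by
    intro x hx
    simp only [hρdef, hwdef, hx, mul_zero, zero_pow, ne_eq, OfNat.ofNat_ne_zero,
      not_false_eq_true, add_zero]
    exact Real.sqrt_sq (norm_nonneg x)
  have hρge : ∀ x, ‖x‖ ≤ ρ x := by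
    intro x
    have h1' : ‖x‖^2 ≤ w x := by simp only [hwdef]; nlinarith [sq_nonneg (η * χ₀ x)]
    calc ‖x‖ = Real.sqrt (‖x‖^2) := (Real.sqrt_sq (norm_nonneg x)).symm
      _ ≤ ρ x := Real.sqrt_le_sqrt h1'
  have hρle : ∀ x, ρ x ≤ ‖x‖ + η := by
    intro x
    have hχ₀nn : 0 ≤ χ₀ x := χ₀.nonneg
    have hχ₀le : χ₀ x ≤ 1 := χ₀.le_one
    have h1' : w x ≤ (‖x‖ + η * χ₀ x)^2 := by
      simp only [hwdef]; nlinarith [norm_nonneg x, mul_nonneg hηpos.le hχ₀nn]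
    calc ρ x ≤ Real.sqrt ((‖x‖ + η * χ₀ x)^2) := Real.sqrt_le_sqrt h1'
      _ = ‖x‖ + η * χ₀ x := Real.sqrt_sq (by positivity)
      _ ≤ ‖x‖ + η := by nlinarith
  -- the modified function ft
  set ft := fun x : E3 => f₁ x + ρ x * f₂ x with hftdef
  have hfthol : Hol α a m ft :=
    h1.add ha ((hol_smooth hα hα1' ha hρsmooth).mul hα hα1' ha h2)
  have hfteq : ∀ x ∈ closedBall (0:E3) a, χ₀ x = 0 → ft x = f x := by
    intro x hx hχ₀x
    rw [hrep x hx]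
    simp only [hftdef, hρeq x hχ₀x]
  have hftne : ∀ x ∈ closedBall (0:E3) a, ft x ≠ 0 := by
    intro x hx
    have hρd : |ρ x - ‖x‖| ≤ η := by
      rw [abs_le]
      constructor
      · linarith [hρge x]
      · linarith [hρle x]
    have hdiff : |ft x - f x| ≤ η * M₂ := by
      rw [hrep x hx]
      have he : ft x - (f₁ x + ‖x‖ * f₂ x) = (ρ x - ‖x‖) * f₂ x := by
        simp only [hftdef]; ring
      rw [he, abs_mul]
      have hf₂b : |f₂ x| ≤ M₂ := by
        have := hM₂ x hx; rwa [Real.norm_eq_abs] at this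
      exact mul_le_mul hρd hf₂b (abs_nonneg _) hηpos.le
    have hflow : εf ≤ |f x| := hminz hx
    intro h0
    rw [h0] at hdiff
    rw [abs_sub_comm, sub_zero] at hdiff
    linarith
  -- bound for D and the modified denominator Dt
  obtain ⟨MD, hMD⟩ := (isCompact_closedBall (0:E3) a).exists_bound_of_continuousOn hcD
  have hMD0 : 0 ≤ MD := le_trans (norm_nonneg _) (hMD 0 h0s)
  set K := MD + 1 with hKdef
  set Dt := fun x : E3 => f₁ x * f₁ x + (-(‖x‖^2 * (f₂ x * f₂ x)) + K * (1 - χ₁ x)) with hDtdef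
  have hDteq : ∀ x, Dt x = D x + K * (1 - χ₁ x) := by
    intro x; simp only [hDtdef, hDdef]; ring
  have hnormsq : ContDiff ℝ (⊤:ℕ∞) (fun x : E3 => ‖x‖^2) := contDiff_norm_sq ℝ
  have hDthol : Hol α a m Dt := by
    refine (h1.mul hα hα1' ha h1).add ha ?_
    refine Hol.add ha ?_ ?_
    · exact ((hol_smooth hα hα1' ha hnormsq).mul hα hα1' ha (h2.mul hα hα1' ha h2)).neg ha
    · exact hol_smooth hα hα1' ha (contDiff_const.mul (contDiff_const.sub χ₁.contDiff))
  have hDtlow : ∀ x ∈ closedBall (0:E3) a, min ε₀ 1 ≤ Dt x := by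
    intro x hx
    rcases le_or_gt ‖x‖ δ with hle | hgt
    · have hl := hDlow x hx hle
      have hnn : 0 ≤ K * (1 - χ₁ x) := by
        have := χ₁.le_one (x := x)
        have hK0 : (0:ℝ) ≤ K := by rw [hKdef]; linarith
        nlinarith
      rw [hDteq x]
      calc min ε₀ 1 ≤ ε₀ := min_le_left _ _
        _ ≤ D x + K * (1 - χ₁ x) := by linarith
    · have hχ₁0 : χ₁ x = 0 := by
        apply Function.notMem_support.mp
        rw [χ₁.support_eq]
        simp only [mem_ball, dist_zero_right, not_lt]
        exact hgt.le
      have hDxlow : -MD ≤ D x := by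
        have := hMD x hx
        rw [Real.norm_eq_abs] at this
        linarith [(abs_le.mp this).1]
      rw [hDteq x, hχ₁0]
      calc min ε₀ 1 ≤ 1 := min_le_right _ _
        _ ≤ D x + K * (1 - 0) := by rw [hKdef]; linarith
  have hDtpos : ∀ x ∈ closedBall (0:E3) a, 0 < Dt x :=
    fun x hx => lt_of_lt_of_le (lt_min hε₀pos one_pos) (hDtlow x hx)
  have hDtne : ∀ x ∈ closedBall (0:E3) a, Dt x ≠ 0 := fun x hx => (hDtpos x hx).ne'
  -- the two pieces
  set g₁ := fun x : E3 => (1 - χ x) * (ft x)⁻¹ + χ x * f₁ x * (Dt x)⁻¹ with hg₁def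
  set g₂ := fun x : E3 => -(χ x * f₂ x * (Dt x)⁻¹) with hg₂def
  have hχs : Hol α a m (fun x : E3 => 1 - χ x) :=
    hol_smooth hα hα1' ha (contDiff_const.sub χ.contDiff)
  have hχh : Hol α a m (fun x : E3 => (χ x : ℝ)) := hol_smooth hα hα1' ha χ.contDiff
  have hftinv : Hol α a m (fun x => (ft x)⁻¹) := Hol.inv hα hα1' ha m ft hfthol hftne
  have hDtinv : Hol α a m (fun x => (Dt x)⁻¹) := Hol.inv hα hα1' ha m Dt hDthol hDtne
  have hg₁hol : Hol α a m g₁ :=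
    (hχs.mul hα hα1' ha hftinv).add ha
      (((hχh.mul hα hα1' ha h1).mul hα hα1' ha hDtinv))
  have hg₂hol : Hol α a m g₂ := ((hχh.mul hα hα1' ha h2).mul hα hα1' ha hDtinv).neg ha
  refine ⟨g₁, g₂, hg₁hol, hg₂hol, ?_⟩
  intro x hx
  show (f x)⁻¹ = g₁ x + ‖x‖ * g₂ x
  have hfx := hne x hx
  by_cases hχx : χ x = 0
  · have hnorm : δ/2 ≤ ‖x‖ := by
      by_contra hcon
      push_neg at hcon
      have : 0 < χ x := χ.pos_of_mem_ball (by
        simp only [mem_ball, dist_zero_right]; exact hcon)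
      rw [hχx] at this; exact lt_irrefl 0 this
    have hχ₀x : χ₀ x = 0 := by
      apply Function.notMem_support.mp
      rw [χ₀.support_eq]
      simp only [mem_ball, dist_zero_right, not_lt]
      have hr : χ₀.rOut = δ/4 := rfl
      linarith
    have hftx : ft x = f x := hfteq x hx hχ₀x
    simp only [hg₁def, hg₂def, hχx, hftx]
    ring
  · have hball : ‖x‖ < δ/2 := by
      have hxs : x ∈ Function.support χ := Function.mem_support.mpr hχx
      rw [χ.support_eq] at hxs
      simpa only [mem_ball, dist_zero_right] using hxs
    have hχ₁1 : χ₁ x = 1 := χ₁.one_of_mem_closedBall (by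
      simp only [mem_closedBall, dist_zero_right]; show ‖x‖ ≤ δ/2; linarith)
    have hDtx : Dt x = D x := by rw [hDteq, hχ₁1]; ring
    have hDxpos : 0 < D x := by rw [← hDtx]; exact hDtpos x hx
    have hDfact : D x = f x * (f₁ x - ‖x‖ * f₂ x) := by
      rw [hrep x hx]; simp only [hDdef]; ring
    have hune : f₁ x - ‖x‖ * f₂ x ≠ 0 := by
      intro h0
      rw [h0, mul_zero] at hDfact
      exact hDxpos.ne' hDfact
    have hfinv : (f x)⁻¹ = (f₁ x - ‖x‖ * f₂ x) * (D x)⁻¹ := by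
      rw [hDfact]
      field_simp
    have hclaim2 : (1 - χ x) * (ft x)⁻¹ = (1 - χ x) * (f x)⁻¹ := by
      by_cases hx4 : ‖x‖ ≤ δ/4
      · have hχ1 : χ x = 1 := χ.one_of_mem_closedBall (by
          simp only [mem_closedBall, dist_zero_right]; exact hx4)
        rw [hχ1]; ring
      · push_neg at hx4
        have hχ₀x : χ₀ x = 0 := by
          apply Function.notMem_support.mp
          rw [χ₀.support_eq]
          simp only [mem_ball, dist_zero_right, not_lt]
          have hr : χ₀.rOut = δ/4 := rfl
          linarith
        rw [hfteq x hx hχ₀x]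
    have : (f x)⁻¹ = (1 - χ x) * (f x)⁻¹ + χ x * (f x)⁻¹ := by ring
    rw [this]
    simp only [hg₁def, hg₂def]
    rw [hclaim2, hDtx, hfinv]
    ring

end
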